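/- Define words w_j over the alphabet {1, …, n} inductively by w_1 = 1 and w_j = w_{j−1} · j · w_{j−1} for 1 < j ≤ n. Then for every j with 1 ≤ j ≤ n, the word w_j has length 2^j − 1 and contains no bad j'-pair for any j' ∈ {1, …, n}. -/

import Mathlib

attribute [local instance] Classical.propDecidable

noncomputable section

/-- The word `w` (over the alphabet `{1, …, n} ⊆ ℕ`) contains a bad `j`-pair: two
occurrences of `j` with no larger letter in between. -/
def HasBadPair (w : List ℕ) (j : ℕ) : Prop :=
  ∃ i i' : Fin w.length, (i : ℕ) < (i' : ℕ) ∧ w.get i = j ∧ w.get i' = j ∧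
    ∀ i'' : Fin w.length, (i : ℕ) < (i'' : ℕ) → (i'' : ℕ) < (i' : ℕ) → w.get i'' ≤ j

/-- The words `w_j` with `w_1 = 1` and `w_j = w_{j-1} · j · w_{j-1}`. -/
def wWord : ℕ → List ℕ
  | 0 => []
  | j + 1 => wWord j ++ [j + 1] ++ wWord j

lemma wWord_length (j : ℕ) : (wWord j).length = 2 ^ j - 1 := by
  induction j with
  | zero => simp [wWord]
  | succ k ih =>
    simp only [wWord, List.length_append, List.length_singleton, ih]
    have : 1 ≤ 2 ^ k := Nat.one_le_two_pow
    rw [pow_succ]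
    omega

lemma wWord_mem_le {j a : ℕ} (h : a ∈ wWord j) : a ≤ j := by
  induction j with
  | zero => simp [wWord] at h
  | succ k ih =>
    simp only [wWord, List.mem_append, List.mem_singleton] at h
    rcases h with (h | h) | h
    · exact (ih h).trans (Nat.le_succ k)
    · omega
    · exact (ih h).trans (Nat.le_succ k)

lemma wWord_get (j : ℕ) (k : ℕ) (hk : k < (wWord (j+1)).length) :
    (∃ h : k < (wWord j).length, (wWord (j+1))[k] = (wWord j)[k]'h) ∨
    (k = (wWord j).length ∧ (wWord (j+1))[k] = j + 1) ∨
    ((wWord j).length < k ∧ ∃ h : k - ((wWord j).length + 1) < (wWord j).length,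
      (wWord (j+1))[k] = (wWord j)[k - ((wWord j).length + 1)]'h) := by
  set w := wWord j with hw
  have hlen : (wWord (j+1)).length = w.length + 1 + w.length := by
    simp only [wWord, List.length_append, List.length_singleton]
    rfl
  rcases lt_trichotomy k w.length with h | h | h
  · left
    refine ⟨h, ?_⟩
    rw [List.getElem_of_eq (show wWord (j+1) = w ++ [j+1] ++ w from rfl)]
    rw [List.getElem_append_left (by simp; omega), List.getElem_append_left h]
  · right; left
    refine ⟨h, ?_⟩
    rw [List.getElem_of_eq (show wWord (j+1) = w ++ [j+1] ++ w from rfl)]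
    rw [List.getElem_append_left (by simp; omega), List.getElem_append_right (le_of_eq h.symm)]
    simp [h]
  · right; right
    have hh : k - (w.length + 1) < w.length := by omega
    refine ⟨h, hh, ?_⟩
    rw [List.getElem_of_eq (show wWord (j+1) = w ++ [j+1] ++ w from rfl)]
    rw [List.getElem_append_right (by simp; omega)]
    simp

lemma wWord_no_bad (j j' : ℕ) : ¬ HasBadPair (wWord j) j' := by
  induction j with
  | zero =>
    rintro ⟨i, _⟩
    exact absurd i.isLt (by simp [wWord])
  | succ m ih =>
    rintro ⟨i, i', hlt, hi, hi', hbetween⟩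
    simp only [List.get_eq_getElem] at hi hi' hbetween
    have hlen : (wWord (m+1)).length = (wWord m).length + 1 + (wWord m).length := by
      simp only [wWord, List.length_append, List.length_singleton]
      try omega
    rcases wWord_get m i i.isLt with ⟨h1, e1⟩ | ⟨h1, e1⟩ | ⟨h1, h1', e1⟩
    · rcases wWord_get m i' i'.isLt with ⟨h2, e2⟩ | ⟨h2, e2⟩ | ⟨h2, h2', e2⟩
      · -- both in the left copy
        apply ih
        refine ⟨⟨i, h1⟩, ⟨i', h2⟩, hlt, by rw [List.get_eq_getElem, ← e1, hi],
          by rw [List.get_eq_getElem, ← e2, hi'], ?_⟩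
        rintro ⟨k, hkw⟩ hk1 hk2
        simp only [Fin.val_mk] at hk1 hk2 ⊢
        have hk : k < (wWord (m+1)).length := by omega
        have := hbetween ⟨k, hk⟩ hk1 hk2
        simp only [Fin.val_mk] at this
        rcases wWord_get m k hk with ⟨h3, e3⟩ | ⟨h3, e3⟩ | ⟨h3, _, _⟩
        · rw [List.get_eq_getElem, ← e3]; exact this
        · omega
        · omega
      · -- i' is the middle letter
        have hjv : j' = m + 1 := by rw [← hi', e2]
        have hmem : ((wWord m)[(i : ℕ)]'h1) ∈ wWord m := List.getElem_mem h1
        have := wWord_mem_le hmem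
        rw [← e1, hi] at this
        omega
      · -- i left, i' right: middle letter m+1 is strictly between
        have hM : (wWord m).length < (wWord (m+1)).length := by omega
        have hmid := hbetween ⟨(wWord m).length, hM⟩ (by simpa using h1) (by simpa using h2)
        simp only [Fin.val_mk] at hmid
        rcases wWord_get m (wWord m).length hM with ⟨h3, _⟩ | ⟨_, e3⟩ | ⟨h3, _, _⟩
        · omega
        · rw [e3] at hmid
          have hle : j' ≤ m := by
            have hmem : ((wWord m)[(i : ℕ)]'h1) ∈ wWord m := List.getElem_mem h1
            have := wWord_mem_le hmem
            rw [← e1, hi] at this; exact this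
          omega
        · omega
    · -- i is middle
      have hjv : j' = m + 1 := by rw [← hi, e1]
      rcases wWord_get m i' i'.isLt with ⟨h2, _⟩ | ⟨h2, _⟩ | ⟨h2, h2', e2⟩
      · omega
      · omega
      · have hmem : ((wWord m)[(i' : ℕ) - ((wWord m).length + 1)]'h2') ∈ wWord m :=
          List.getElem_mem h2'
        have := wWord_mem_le hmem
        rw [← e2, hi'] at this
        omega
    · -- i in right copy, hence i' too
      rcases wWord_get m i' i'.isLt with ⟨h2, _⟩ | ⟨h2, _⟩ | ⟨h2, h2', e2⟩
      · omega
      · omega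
      · apply ih
        refine ⟨⟨(i : ℕ) - ((wWord m).length + 1), h1'⟩,
          ⟨(i' : ℕ) - ((wWord m).length + 1), h2'⟩, by simp only [Fin.val_mk]; omega,
          by rw [List.get_eq_getElem, ← e1, hi],
          by rw [List.get_eq_getElem, ← e2, hi'], ?_⟩
        rintro ⟨k, hkw⟩ hk1 hk2
        simp only [Fin.val_mk] at hk1 hk2 ⊢
        have hk : k + ((wWord m).length + 1) < (wWord (m+1)).length := by omega
        have := hbetween ⟨k + ((wWord m).length + 1), hk⟩
          (by simp only [Fin.val_mk]; omega) (by simp only [Fin.val_mk]; omega)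
        simp only [Fin.val_mk] at this
        rcases wWord_get m (k + ((wWord m).length + 1)) hk with ⟨h3, _⟩ | ⟨h3, _⟩ | ⟨h3, h3', e3⟩
        · omega
        · omega
        · rw [e3] at this
          rw [List.get_eq_getElem]
          convert this using 2
          simp only [Fin.val_mk]
          omega

/-- For `1 ≤ j ≤ n`, the word `w_j` has length `2^j - 1` and contains no
bad `j'`-pair for any `j' ∈ {1, …, n}`. -/
theorem statement17 (n j : ℕ) (hj1 : 1 ≤ j) (hjn : j ≤ n) :
    (wWord j).length = 2 ^ j - 1 ∧
    ∀ j' : ℕ, 1 ≤ j' → j' ≤ n → ¬ HasBadPair (wWord j) j' := by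
  exact ⟨wWord_length j, fun j' _ _ => wWord_no_bad j j'⟩
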